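/- If (w*, b*, ξ*, z*) is an optimal solution of the ramp-loss SVM problem (RL-ℓp): minimize (1/p)‖w‖_p^p + C(∑_{i=1}^n ξ_i + 2∑_{i=1}^n z_i) subject to: for each i, z_i = 0 implies y_i(⟨w, x_i⟩ + b) ≥ 1 − ξ_i, with 0 ≤ ξ_i ≤ 2 and z_i ∈ {0,1}, and C > 0, then ξ_i* · z_i* = 0 for every i. -/
import Mathlib


open Finset

/-- At any optimal solution of the conditional ramp-loss SVM problem
(RL-ℓp), the complementarity condition ξ_i* · z_i* = 0 holds for every i. -/
theorem rampLoss_optimal_complementarity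
    (n d : ℕ) (x : Fin n → Fin d → ℝ) (y : Fin n → ℝ)
    (hy : ∀ i, y i = 1 ∨ y i = -1)
    (C p : ℝ) (hC : 0 < C) (hp : 1 ≤ p)
    (Feasible : (Fin d → ℝ) → ℝ → (Fin n → ℝ) → (Fin n → ℝ) → Prop)
    (hFeas : ∀ w b ξ z, Feasible w b ξ z ↔
      (∀ i, 0 ≤ ξ i ∧ ξ i ≤ 2) ∧ (∀ i, z i = 0 ∨ z i = 1) ∧
      (∀ i, z i = 0 → y i * ((∑ k, w k * x i k) + b) ≥ 1 - ξ i))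
    (obj : (Fin d → ℝ) → ℝ → (Fin n → ℝ) → (Fin n → ℝ) → ℝ)
    (hobj : ∀ w b ξ z, obj w b ξ z =
      (1 / p) * (∑ k, |w k| ^ p) + C * ((∑ i, ξ i) + 2 * ∑ i, z i))
    (w' : Fin d → ℝ) (b' : ℝ) (ξ' z' : Fin n → ℝ)
    (hfeas : Feasible w' b' ξ' z')
    (hopt : ∀ w b ξ z, Feasible w b ξ z → obj w' b' ξ' z' ≤ obj w b ξ z) :
    ∀ i, ξ' i * z' i = 0 := by
  intro i
  obtain ⟨hξ, hz, hcon⟩ := (hFeas w' b' ξ' z').1 hfeas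
  rcases hz i with h0 | h1
  · simp [h0]
  · -- show ξ' i = 0 by modifying ξ at i to 0
    have hfeas2 : Feasible w' b' (Function.update ξ' i 0) z' := by
      rw [hFeas]
      refine ⟨fun j => ?_, hz, fun j hj => ?_⟩
      · rcases eq_or_ne j i with rfl | hne
        · simp
        · simpa [Function.update_of_ne hne] using hξ j
      · rcases eq_or_ne j i with rfl | hne
        · rw [h1] at hj; norm_num at hj
        · simpa [Function.update_of_ne hne] using hcon j hj
    have hle := hopt w' b' (Function.update ξ' i 0) z' hfeas2
    rw [hobj, hobj] at hle
    have hsum : ∑ j, Function.update ξ' i 0 j = (∑ j, ξ' j) - ξ' i := by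
      rw [Finset.sum_update_of_mem (Finset.mem_univ i), Finset.sdiff_singleton_eq_erase,
        ← Finset.sum_erase_add _ _ (Finset.mem_univ i)]
      ring
    rw [hsum] at hle
    have hξi : ξ' i ≤ 0 := by nlinarith [hle]
    have : ξ' i = 0 := le_antisymm hξi (hξ i).1
    simp [this]
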